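/- Let U ⊆ ℝ² be open, g : U → ℝ a C³ function, p ∈ ℝ, I an interval, and σ : I → U a C¹ curve such that for all t ∈ I: g(σ(t)) = 0, ∇g(σ(t)) ≠ 0, and σ₁(t)² + σ₂(t)² − 1 > 0. Suppose that at every point (x,y) = σ(t): (x²+y²−1)·(g_y·∂_x(H(g)) − g_x·∂_y(H(g))) + 3·(2−p)·H(g)·(x·g_y − y·g_x) = 0, where H(g) = g_xx·g_y² − 2·g_xy·g_x·g_y + g_yy·g_x². Then the function t ↦ H(g)(σ(t))·(σ₁(t)²+σ₂(t)²−1)^{(6−3p)/2} is constant on I; equivalently, there is a constant c with H(g)(σ(t)) = c·(σ₁(t)²+σ₂(t)²−1)^{(3p−6)/2} for all t ∈ I. -/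

import Mathlib

open Filter Set

/-- Partial derivative in the first variable of a function of two real variables. -/
noncomputable def px (h : ℝ → ℝ → ℝ) : ℝ → ℝ → ℝ := fun x y => deriv (fun t => h t y) x

/-- Partial derivative in the second variable of a function of two real variables. -/
noncomputable def py (h : ℝ → ℝ → ℝ) : ℝ → ℝ → ℝ := fun x y => deriv (fun t => h x t) y

/-- `H(g) = g_xx·g_y² − 2·g_xy·g_x·g_y + g_yy·g_x²`. -/
noncomputable def Hfun (g : ℝ → ℝ → ℝ) : ℝ → ℝ → ℝ := fun x y =>
  px (px g) x y * (py g x y) ^ 2 - 2 * py (px g) x y * px g x y * py g x y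
    + py (py g) x y * (px g x y) ^ 2

lemma clm_expand (L : ℝ × ℝ →L[ℝ] ℝ) (v : ℝ × ℝ) :
    L v = v.1 * L (1, 0) + v.2 * L (0, 1) := by
  have hv : v = v.1 • ((1:ℝ), (0:ℝ)) + v.2 • ((0:ℝ), (1:ℝ)) := by
    apply Prod.ext <;> simp
  calc L v = L (v.1 • ((1:ℝ), (0:ℝ)) + v.2 • ((0:ℝ), (1:ℝ))) := by rw [← hv]
    _ = v.1 * L (1, 0) + v.2 * L (0, 1) := by
        rw [map_add, map_smul, map_smul]; simp [smul_eq_mul]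

lemma partial_fst_eq {F : ℝ × ℝ → ℝ} {q : ℝ × ℝ} (hF : DifferentiableAt ℝ F q) :
    deriv (fun s => F (s, q.2)) q.1 = fderiv ℝ F q (1, 0) := by
  have h1 : HasDerivAt (fun s : ℝ => (s, q.2)) ((1 : ℝ), (0 : ℝ)) q.1 :=
    (hasDerivAt_id q.1).prodMk (hasDerivAt_const q.1 q.2)
  exact (hF.hasFDerivAt.comp_hasDerivAt q.1 h1).deriv

lemma partial_snd_eq {F : ℝ × ℝ → ℝ} {q : ℝ × ℝ} (hF : DifferentiableAt ℝ F q) :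
    deriv (fun s => F (q.1, s)) q.2 = fderiv ℝ F q (0, 1) := by
  have h1 : HasDerivAt (fun s : ℝ => (q.1, s)) ((0 : ℝ), (1 : ℝ)) q.2 :=
    (hasDerivAt_const q.2 q.1).prodMk (hasDerivAt_id q.2)
  exact (hF.hasFDerivAt.comp_hasDerivAt q.2 h1).deriv

lemma px_eq {U : Set (ℝ × ℝ)} (hU : IsOpen U) {f : ℝ → ℝ → ℝ} {F : ℝ × ℝ → ℝ}
    (hFf : ∀ q ∈ U, F q = f q.1 q.2) {q : ℝ × ℝ} (hq : q ∈ U)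
    (hF : DifferentiableAt ℝ F q) : px f q.1 q.2 = fderiv ℝ F q (1, 0) := by
  have hcont : Continuous (fun s : ℝ => (s, q.2)) := continuous_id.prodMk continuous_const
  have hmem : {s : ℝ | (s, q.2) ∈ U} ∈ nhds q.1 :=
    (hU.preimage hcont).mem_nhds (by simpa using hq)
  have hev : (fun s => f s q.2) =ᶠ[nhds q.1] (fun s => F (s, q.2)) :=
    Filter.eventually_of_mem hmem fun s hs => (hFf _ hs).symm
  show deriv (fun s => f s q.2) q.1 = _
  rw [hev.deriv_eq]
  exact partial_fst_eq hF

lemma py_eq {U : Set (ℝ × ℝ)} (hU : IsOpen U) {f : ℝ → ℝ → ℝ} {F : ℝ × ℝ → ℝ}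
    (hFf : ∀ q ∈ U, F q = f q.1 q.2) {q : ℝ × ℝ} (hq : q ∈ U)
    (hF : DifferentiableAt ℝ F q) : py f q.1 q.2 = fderiv ℝ F q (0, 1) := by
  have hcont : Continuous (fun s : ℝ => (q.1, s)) := continuous_const.prodMk continuous_id
  have hmem : {s : ℝ | (q.1, s) ∈ U} ∈ nhds q.2 :=
    (hU.preimage hcont).mem_nhds (by simpa using hq)
  have hev : (fun s => f q.1 s) =ᶠ[nhds q.2] (fun s => F (q.1, s)) :=
    Filter.eventually_of_mem hmem fun s hs => (hFf _ hs).symm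
  show deriv (fun s => f q.1 s) q.2 = _
  rw [hev.deriv_eq]
  exact partial_snd_eq hF

theorem stmt10 (U : Set (ℝ × ℝ)) (hU : IsOpen U) (g : ℝ → ℝ → ℝ)
    (hg : ContDiffOn ℝ 3 (fun q : ℝ × ℝ => g q.1 q.2) U)
    (p : ℝ) (I : Set ℝ) (hI : Convex ℝ I)
    (σ : ℝ → ℝ × ℝ) (hσ : ContDiffOn ℝ 1 σ I)
    (hmem : ∀ t ∈ I, σ t ∈ U)
    (hg0 : ∀ t ∈ I, g (σ t).1 (σ t).2 = 0)
    (hpos : ∀ t ∈ I, 0 < (σ t).1 ^ 2 + (σ t).2 ^ 2 - 1)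
    (hgrad : ∀ t ∈ I, (px g (σ t).1 (σ t).2, py g (σ t).1 (σ t).2) ≠ (0, 0))
    (hpde : ∀ t ∈ I,
      ((σ t).1 ^ 2 + (σ t).2 ^ 2 - 1) *
          (py g (σ t).1 (σ t).2 * px (Hfun g) (σ t).1 (σ t).2
            - px g (σ t).1 (σ t).2 * py (Hfun g) (σ t).1 (σ t).2)
        + 3 * (2 - p) * Hfun g (σ t).1 (σ t).2 *
            ((σ t).1 * py g (σ t).1 (σ t).2 - (σ t).2 * px g (σ t).1 (σ t).2) = 0) :
    (∃ c : ℝ, ∀ t ∈ I,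
        Hfun g (σ t).1 (σ t).2 * ((σ t).1 ^ 2 + (σ t).2 ^ 2 - 1) ^ ((6 - 3 * p) / 2) = c) ∧
    (∃ c : ℝ, ∀ t ∈ I,
        Hfun g (σ t).1 (σ t).2 = c * ((σ t).1 ^ 2 + (σ t).2 ^ 2 - 1) ^ ((3 * p - 6) / 2)) := by
  classical
  set G : ℝ × ℝ → ℝ := fun q : ℝ × ℝ => g q.1 q.2 with hGdef
  set Gx : ℝ × ℝ → ℝ := fun q => fderiv ℝ G q (1, 0) with hGxdef
  set Gy : ℝ × ℝ → ℝ := fun q => fderiv ℝ G q (0, 1) with hGydef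
  have hGx2 : ContDiffOn ℝ 2 Gx U :=
    (hg.fderiv_of_isOpen hU (by norm_num)).clm_apply contDiffOn_const
  have hGy2 : ContDiffOn ℝ 2 Gy U :=
    (hg.fderiv_of_isOpen hU (by norm_num)).clm_apply contDiffOn_const
  set Hq : ℝ × ℝ → ℝ := fun q =>
    fderiv ℝ Gx q (1, 0) * (Gy q) ^ 2 - 2 * fderiv ℝ Gx q (0, 1) * Gx q * Gy q
      + fderiv ℝ Gy q (0, 1) * (Gx q) ^ 2 with hHqdef
  have hHq1 : ContDiffOn ℝ 1 Hq U := by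
    have h1 : ContDiffOn ℝ 1 (fun q => fderiv ℝ Gx q (1, 0)) U :=
      (hGx2.fderiv_of_isOpen hU (by norm_num)).clm_apply contDiffOn_const
    have h2 : ContDiffOn ℝ 1 (fun q => fderiv ℝ Gx q (0, 1)) U :=
      (hGx2.fderiv_of_isOpen hU (by norm_num)).clm_apply contDiffOn_const
    have h3 : ContDiffOn ℝ 1 (fun q => fderiv ℝ Gy q (0, 1)) U :=
      (hGy2.fderiv_of_isOpen hU (by norm_num)).clm_apply contDiffOn_const
    have hx1 : ContDiffOn ℝ 1 Gx U := hGx2.of_le (by norm_num)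
    have hy1 : ContDiffOn ℝ 1 Gy U := hGy2.of_le (by norm_num)
    exact ((h1.mul (hy1.pow 2)).sub
      (((contDiffOn_const.mul h2).mul hx1).mul hy1)).add (h3.mul (hx1.pow 2))
  -- differentiability facts at points of U
  have hGdiff : ∀ q ∈ U, DifferentiableAt ℝ G q := fun q hq =>
    (hg.contDiffAt (hU.mem_nhds hq)).differentiableAt (by norm_num)
  have hGxdiff : ∀ q ∈ U, DifferentiableAt ℝ Gx q := fun q hq =>
    (hGx2.contDiffAt (hU.mem_nhds hq)).differentiableAt (by norm_num)
  have hGydiff : ∀ q ∈ U, DifferentiableAt ℝ Gy q := fun q hq =>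
    (hGy2.contDiffAt (hU.mem_nhds hq)).differentiableAt (by norm_num)
  have hHqdiff : ∀ q ∈ U, DifferentiableAt ℝ Hq q := fun q hq =>
    (hHq1.contDiffAt (hU.mem_nhds hq)).differentiableAt (by norm_num)
  -- identification of px / py with fderiv components
  have hpx : ∀ q ∈ U, px g q.1 q.2 = Gx q := fun q hq =>
    px_eq hU (fun _ _ => rfl) hq (hGdiff q hq)
  have hpy : ∀ q ∈ U, py g q.1 q.2 = Gy q := fun q hq =>
    py_eq hU (fun _ _ => rfl) hq (hGdiff q hq)
  have hpxx : ∀ q ∈ U, px (px g) q.1 q.2 = fderiv ℝ Gx q (1, 0) := fun q hq =>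
    px_eq hU (fun r hr => (hpx r hr).symm) hq (hGxdiff q hq)
  have hpxy : ∀ q ∈ U, py (px g) q.1 q.2 = fderiv ℝ Gx q (0, 1) := fun q hq =>
    py_eq hU (fun r hr => (hpx r hr).symm) hq (hGxdiff q hq)
  have hpyy : ∀ q ∈ U, py (py g) q.1 q.2 = fderiv ℝ Gy q (0, 1) := fun q hq =>
    py_eq hU (fun r hr => (hpy r hr).symm) hq (hGydiff q hq)
  have hHfun : ∀ q ∈ U, Hfun g q.1 q.2 = Hq q := fun q hq => by
    show px (px g) q.1 q.2 * (py g q.1 q.2) ^ 2 - _ + _ = _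
    rw [hpxx q hq, hpxy q hq, hpyy q hq, hpx q hq, hpy q hq]
  have hpxH : ∀ q ∈ U, px (Hfun g) q.1 q.2 = fderiv ℝ Hq q (1, 0) := fun q hq =>
    px_eq hU (fun r hr => (hHfun r hr).symm) hq (hHqdiff q hq)
  have hpyH : ∀ q ∈ U, py (Hfun g) q.1 q.2 = fderiv ℝ Hq q (0, 1) := fun q hq =>
    py_eq hU (fun r hr => (hHfun r hr).symm) hq (hHqdiff q hq)
  -- the function we prove constant
  set Φ : ℝ → ℝ := fun t =>
    Hfun g (σ t).1 (σ t).2 * ((σ t).1 ^ 2 + (σ t).2 ^ 2 - 1) ^ ((6 - 3 * p) / 2) with hΦdef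
  have key : ∀ t ∈ I, HasDerivWithinAt Φ 0 I t := by
    intro t ht
    by_cases hbot : nhdsWithin t (I \ {t}) = ⊥
    · rw [hasDerivWithinAt_iff_tendsto_slope, hbot]
      exact tendsto_bot
    haveI : (nhdsWithin t (I \ {t})).NeBot := ⟨hbot⟩
    have hqU : σ t ∈ U := hmem t ht
    have hσd : HasDerivWithinAt σ (derivWithin σ I t) I t :=
      ((hσ.differentiableOn (by norm_num)) t ht).hasDerivWithinAt
    set v : ℝ × ℝ := derivWithin σ I t with hvdef
    have hσ1 : HasDerivWithinAt (fun s => (σ s).1) v.1 I t :=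
      (ContinuousLinearMap.hasFDerivAt (ContinuousLinearMap.fst ℝ ℝ ℝ)).comp_hasDerivWithinAt t hσd
    have hσ2 : HasDerivWithinAt (fun s => (σ s).2) v.2 I t :=
      (ContinuousLinearMap.hasFDerivAt (ContinuousLinearMap.snd ℝ ℝ ℝ)).comp_hasDerivWithinAt t hσd
    -- derivative of g along σ vanishes
    have hGσ : HasDerivWithinAt (fun s => G (σ s)) (fderiv ℝ G (σ t) v) I t :=
      (hGdiff _ hqU).hasFDerivAt.comp_hasDerivWithinAt t hσd
    have hzero : fderiv ℝ G (σ t) v = 0 := by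
      have h0 := hasDerivWithinAt_iff_tendsto_slope.mp hGσ
      have h0' : slope (fun s => G (σ s)) t =ᶠ[nhdsWithin t (I \ {t})] (fun _ => (0:ℝ)) := by
        filter_upwards [self_mem_nhdsWithin] with s hs
        have hsI : s ∈ I := hs.1
        have e1 : G (σ s) = 0 := hg0 s hsI
        have e2 : G (σ t) = 0 := hg0 t ht
        simp [slope_def_field, e1, e2]
      have h1 : Tendsto (slope (fun s => G (σ s)) t) (nhdsWithin t (I \ {t})) (nhds 0) :=
        tendsto_const_nhds.congr' h0'.symm
      exact tendsto_nhds_unique h0 h1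
    have hab : Gx (σ t) * v.1 + Gy (σ t) * v.2 = 0 := by
      have h := clm_expand (fderiv ℝ G (σ t)) v
      rw [hzero] at h
      simp only [hGxdef, hGydef]
      linarith [h]
    have hden : (Gx (σ t)) ^ 2 + (Gy (σ t)) ^ 2 ≠ 0 := by
      have hg' := hgrad t ht
      rw [hpx _ hqU, hpy _ hqU] at hg'
      intro h
      apply hg'
      have h1 : Gx (σ t) = 0 := by nlinarith [sq_nonneg (Gx (σ t)), sq_nonneg (Gy (σ t))]
      have h2 : Gy (σ t) = 0 := by nlinarith [sq_nonneg (Gx (σ t)), sq_nonneg (Gy (σ t))]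
      rw [h1, h2]
    set l : ℝ := (v.1 * Gy (σ t) - v.2 * Gx (σ t)) / ((Gx (σ t)) ^ 2 + (Gy (σ t)) ^ 2)
      with hldef
    have hv1 : v.1 = l * Gy (σ t) := by
      rw [hldef]
      field_simp
      linear_combination (Gx (σ t)) * hab
    have hv2 : v.2 = -(l * Gx (σ t)) := by
      rw [hldef]
      field_simp
      linear_combination (Gy (σ t)) * hab
    -- derivative of H along σ
    have hHσ : HasDerivWithinAt (fun s => Hfun g (σ s).1 (σ s).2)
        (fderiv ℝ Hq (σ t) v) I t := by
      have h1 : HasDerivWithinAt (fun s => Hq (σ s)) (fderiv ℝ Hq (σ t) v) I t :=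
        (hHqdiff _ hqU).hasFDerivAt.comp_hasDerivWithinAt t hσd
      exact h1.congr (fun s hs => hHfun _ (hmem s hs)) (hHfun _ hqU)
    have hHval : fderiv ℝ Hq (σ t) v =
        l * (Gy (σ t) * px (Hfun g) (σ t).1 (σ t).2
          - Gx (σ t) * py (Hfun g) (σ t).1 (σ t).2) := by
      rw [clm_expand (fderiv ℝ Hq (σ t)) v, ← hpxH _ hqU, ← hpyH _ hqU, hv1, hv2]
      ring
    -- derivative of r along σ
    have hrd : HasDerivWithinAt (fun s => (σ s).1 ^ 2 + (σ s).2 ^ 2 - 1)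
        (2 * (σ t).1 * v.1 + 2 * (σ t).2 * v.2) I t := by
      have := ((hσ1.fun_pow 2).fun_add (hσ2.fun_pow 2)).sub_const 1
      refine this.congr_deriv ?_
      push_cast
      ring
    have hr0 : ((σ t).1 ^ 2 + (σ t).2 ^ 2 - 1) ≠ 0 := ne_of_gt (hpos t ht)
    have hrp : HasDerivWithinAt
        (fun s => ((σ s).1 ^ 2 + (σ s).2 ^ 2 - 1) ^ ((6 - 3 * p) / 2))
        ((6 - 3 * p) / 2 * ((σ t).1 ^ 2 + (σ t).2 ^ 2 - 1) ^ ((6 - 3 * p) / 2 - 1) *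
          (2 * (σ t).1 * v.1 + 2 * (σ t).2 * v.2)) I t :=
      by
        have := Real.hasDerivAt_rpow_const (p := (6 - 3 * p) / 2) (Or.inl hr0)
        exact this.comp_hasDerivWithinAt t hrd
    have hΦ' := hHσ.mul hrp
    have hre : ((σ t).1 ^ 2 + (σ t).2 ^ 2 - 1) ^ ((6 - 3 * p) / 2) =
        ((σ t).1 ^ 2 + (σ t).2 ^ 2 - 1) ^ ((6 - 3 * p) / 2 - 1) *
          ((σ t).1 ^ 2 + (σ t).2 ^ 2 - 1) := by
      rw [← Real.rpow_add_one hr0]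
      norm_num
    have hval : fderiv ℝ Hq (σ t) v * ((σ t).1 ^ 2 + (σ t).2 ^ 2 - 1) ^ ((6 - 3 * p) / 2)
        + Hfun g (σ t).1 (σ t).2 *
          ((6 - 3 * p) / 2 * ((σ t).1 ^ 2 + (σ t).2 ^ 2 - 1) ^ ((6 - 3 * p) / 2 - 1) *
            (2 * (σ t).1 * v.1 + 2 * (σ t).2 * v.2)) = 0 := by
      have hpde' := hpde t ht
      rw [hpx _ hqU, hpy _ hqU] at hpde'
      rw [hHval, hv1, hv2, hre]
      linear_combination (l * ((σ t).1 ^ 2 + (σ t).2 ^ 2 - 1) ^ ((6 - 3 * p) / 2 - 1)) *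
        hpde'
    rw [hval] at hΦ'
    exact hΦ'
  by_cases hne : I.Nonempty
  · obtain ⟨t₀, ht₀⟩ := hne
    have hconst : ∀ t ∈ I, Φ t = Φ t₀ := by
      intro t ht
      have hb := Convex.norm_image_sub_le_of_norm_hasDerivWithin_le (C := 0)
        (f' := fun _ => (0:ℝ)) key (fun x _ => by simp) hI ht₀ ht
      have h2 : ‖Φ t - Φ t₀‖ ≤ 0 := by simpa using hb
      exact sub_eq_zero.mp (norm_le_zero_iff.mp h2)
    refine ⟨⟨Φ t₀, hconst⟩, ⟨Φ t₀, fun t ht => ?_⟩⟩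
    have hr := hpos t ht
    have hpow : (0:ℝ) < ((σ t).1 ^ 2 + (σ t).2 ^ 2 - 1) ^ ((6 - 3 * p) / 2) :=
      Real.rpow_pos_of_pos hr _
    have hexp : (3 * p - 6) / 2 = -((6 - 3 * p) / 2) := by ring
    have hc : Hfun g (σ t).1 (σ t).2 *
        ((σ t).1 ^ 2 + (σ t).2 ^ 2 - 1) ^ ((6 - 3 * p) / 2) = Φ t₀ := hconst t ht
    rw [hexp, Real.rpow_neg hr.le, ← hc, mul_assoc, mul_inv_cancel₀ hpow.ne', mul_one]
  · exact ⟨⟨0, fun t ht => absurd ⟨t, ht⟩ hne⟩, ⟨0, fun t ht => absurd ⟨t, ht⟩ hne⟩⟩
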